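/- arXiv:1607.00163 — 2 statements merged into one kernel-verified Lean document; each statement's English description precedes it below -/
import Mathlib

section
/- Let Y' be an invertible complex N×N matrix, and suppose complex sequences V[n], V̄[n] ∈ ℂ^N (n ≥ 0) satisfy Y'·V[n] = r₁[n-1] and conj(Y')·V̄[n] = r₂[n-1], where r₁[-1] = -Y₀, r₂[-1] = conj(Y₀) for some fixed Y₀ ∈ ℂ^N, and for n ≥ 1, r₁[n-1]ᵢ = Sᵢ*·W̄ᵢ[n-1] and r₂[n-1]ᵢ = Sᵢ·Wᵢ[n-1], where the sequences W, W̄ are determined by the convolution conditions Σ_{m=0}^{n} Vᵢ[m]Wᵢ[n-m] = δ_{n,0} and Σ_{m=0}^{n} V̄ᵢ[m]W̄ᵢ[n-m] = δ_{n,0}, with Vᵢ[0] ≠ 0 and V̄ᵢ[0] ≠ 0 for all i. Then V̄[n] = conj(V[n]) for all n ≥ 0 (the reflecting condition holds for all power series coefficients). -/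
open Matrix Complex Finset

lemma conj_mulVec {N : ℕ} (A : Matrix (Fin N) (Fin N) ℂ) (x : Fin N → ℂ) :
    (A.map (starRingEnd ℂ)).mulVec (fun i => starRingEnd ℂ (x i))
      = fun i => starRingEnd ℂ (A.mulVec x i) := by
  funext i
  simp [Matrix.mulVec, dotProduct, map_sum, _root_.map_mul]

/-- Reflecting condition for all HELM power-series coefficients in the PQ-only case. -/
theorem stmt_1 (N : ℕ) (Y' : Matrix (Fin N) (Fin N) ℂ) (hY : IsUnit Y')
    (Y₀ S : Fin N → ℂ)
    (V Vb W Wb : ℕ → Fin N → ℂ)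
    (hV0 : Y'.mulVec (V 0) = -Y₀)
    (hVb0 : (Y'.map (starRingEnd ℂ)).mulVec (Vb 0) = -(fun i => starRingEnd ℂ (Y₀ i)))
    (hVn : ∀ n ≥ 1, Y'.mulVec (V n) = fun i => starRingEnd ℂ (S i) * Wb (n - 1) i)
    (hVbn : ∀ n ≥ 1, (Y'.map (starRingEnd ℂ)).mulVec (Vb n) = fun i => S i * W (n - 1) i)
    (hW : ∀ n, ∀ i, ∑ m ∈ Finset.range (n + 1), V m i * W (n - m) i
        = if n = 0 then 1 else 0)
    (hWb : ∀ n, ∀ i, ∑ m ∈ Finset.range (n + 1), Vb m i * Wb (n - m) i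
        = if n = 0 then 1 else 0)
    (hV0ne : ∀ i, V 0 i ≠ 0) (hVb0ne : ∀ i, Vb 0 i ≠ 0) :
    ∀ n, Vb n = fun i => starRingEnd ℂ (V n i) := by
  have hYc : IsUnit (Y'.map (starRingEnd ℂ)) := by
    have := hY.map (RingHom.mapMatrix (starRingEnd ℂ) :
      Matrix (Fin N) (Fin N) ℂ →+* Matrix (Fin N) (Fin N) ℂ)
    simpa using this
  have hinj : Function.Injective (Y'.map (starRingEnd ℂ)).mulVec :=
    Matrix.mulVec_injective_iff_isUnit.2 hYc
  -- strong induction proving both Vb and Wb reflecting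
  have key : ∀ n, (Vb n = fun i => starRingEnd ℂ (V n i)) ∧
      (Wb n = fun i => starRingEnd ℂ (W n i)) := by
    intro n
    induction n using Nat.strong_induction_on with
    | _ n ih =>
      have hVbn' : Vb n = fun i => starRingEnd ℂ (V n i) := by
        apply hinj
        rcases Nat.eq_zero_or_pos n with rfl | hn
        · rw [hVb0, conj_mulVec, hV0]
          funext i; simp
        · rw [hVbn n hn, conj_mulVec, hVn n hn]
          have hWbprev : Wb (n - 1) = fun i => starRingEnd ℂ (W (n - 1) i) :=
            (ih (n - 1) (Nat.sub_lt hn one_pos)).2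
          funext i
          simp [hWbprev, _root_.map_mul]
      refine ⟨hVbn', ?_⟩
      funext i
      -- conjugate of hW n i
      have h1 : ∑ m ∈ Finset.range (n + 1),
          (starRingEnd ℂ (V m i)) * (starRingEnd ℂ (W (n - m) i))
          = if n = 0 then 1 else 0 := by
        have := congrArg (starRingEnd ℂ) (hW n i)
        rw [map_sum] at this
        simpa [_root_.map_mul, apply_ite (starRingEnd ℂ)] using this
      have h2 := hWb n i
      -- rewrite terms with m ≥ 1 and m = n... split off m = 0
      rw [Finset.sum_range_succ'] at h1 h2
      have heq : ∀ m ∈ Finset.range n,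
          Vb (m + 1) i * Wb (n - (m + 1)) i
            = starRingEnd ℂ (V (m + 1) i) * starRingEnd ℂ (W (n - (m + 1)) i) := by
        intro m hm
        rw [Finset.mem_range] at hm
        have hVm : Vb (m + 1) = fun i => starRingEnd ℂ (V (m + 1) i) := by
          rcases Nat.lt_or_ge (m + 1) n with h | h
          · exact (ih (m + 1) h).1
          · have : m + 1 = n := le_antisymm (by omega) h
            rw [this]; exact hVbn'
        have hWm : Wb (n - (m + 1)) = fun i => starRingEnd ℂ (W (n - (m + 1)) i) :=
          (ih (n - (m + 1)) (by omega)).2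
        rw [hVm, hWm]
      rw [Finset.sum_congr rfl heq] at h2
      have hcancel : Vb 0 i * Wb (n - 0) i = starRingEnd ℂ (V 0 i) * starRingEnd ℂ (W (n - 0) i) :=
        add_left_cancel (h2.trans h1.symm)
      have hVb0eq : Vb 0 i = starRingEnd ℂ (V 0 i) := by
        rcases Nat.eq_zero_or_pos n with rfl | hn
        · exact congrFun hVbn' i
        · exact congrFun (ih 0 hn).1 i
      rw [hVb0eq] at hcancel
      have hc : starRingEnd ℂ (V 0 i) ≠ 0 := by
        simpa using hV0ne i
      simpa using mul_left_cancel₀ hc hcancel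
  intro n
  exact (key n).1
end

section
/- Let Y be an (N+1)×(N+1) complex symmetric matrix with zero row sums (Σ_k Y_{ik} = 0 for all i), and let Y' be obtained by deleting row and column 0. If the weighted graph on vertices {0,…,N} with edge weights -Y_{ik} (for i ≠ k, Y_{ik} ≠ 0) is connected and all off-diagonal entries Y_{ik} have nonzero negative real part times -1 (i.e., the edge admittances have positive real conductance), then Y' is invertible. -/
open Matrix Complex Finset

/-- The reduced admittance matrix of a connected network with zero row sums and
branch admittances of positive real conductance is invertible. -/
theorem stmt_7 (N : ℕ) (Y : Matrix (Fin (N + 1)) (Fin (N + 1)) ℂ)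
    (hsymm : Y.IsSymm)
    (hrow : ∀ i, ∑ k, Y i k = 0)
    (hoff : ∀ i k, i ≠ k → Y i k ≠ 0 → 0 < (-(Y i k)).re)
    (hconn : ∀ i k : Fin (N + 1),
      Relation.ReflTransGen (fun a b => a ≠ b ∧ Y a b ≠ 0) i k) :
    IsUnit (Y.submatrix Fin.succ Fin.succ) := by
  rw [← Matrix.mulVec_injective_iff_isUnit]
  suffices h : ∀ v, (Y.submatrix Fin.succ Fin.succ).mulVec v = 0 → v = 0 by
    intro a b hab
    have := h (a - b) (by rw [Matrix.mulVec_sub, hab, sub_self])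
    exact sub_eq_zero.mp this
  intro v hv
  set x : Fin (N + 1) → ℂ := Fin.cases 0 v with hxdef
  have hx0 : x 0 = 0 := rfl
  have hxs : ∀ j : Fin N, x j.succ = v j := fun j => rfl
  have hsym' : ∀ i k, Y k i = Y i k := by
    intro i k
    have := congrFun (congrFun hsymm.eq i) k
    simpa [Matrix.transpose_apply] using this
  have hcol : ∀ k, ∑ i, Y i k = 0 := by
    intro k
    calc ∑ i, Y i k = ∑ i, Y k i := by simp [hsym']
    _ = 0 := hrow k
  -- Y.mulVec x vanishes at successor indices
  have hmul : ∀ j : Fin N, Y.mulVec x j.succ = 0 := by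
    intro j
    have h := congrFun hv j
    simp only [Matrix.mulVec, dotProduct, Matrix.submatrix_apply, Pi.zero_apply] at h ⊢
    rw [Fin.sum_univ_succ]
    simpa [hx0, hxs] using h
  -- the quadratic form S vanishes
  have hS : ∑ i, (starRingEnd ℂ) (x i) * Y.mulVec x i = 0 := by
    rw [Fin.sum_univ_succ]
    simp [hx0, hmul]
  have hSexp : ∑ i, ∑ k, Y i k * ((starRingEnd ℂ) (x i) * x k) = 0 := by
    rw [← hS]
    congr 1; funext i
    simp only [Matrix.mulVec, dotProduct, Finset.mul_sum]
    congr 1; funext k; ring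
  -- the swapped sum also equals 0
  have hSswap : ∑ i, ∑ k, Y i k * ((starRingEnd ℂ) (x k) * x i) = 0 := by
    rw [Finset.sum_comm]
    calc ∑ k, ∑ i, Y i k * ((starRingEnd ℂ) (x k) * x i)
        = ∑ k, ∑ i, Y k i * ((starRingEnd ℂ) (x k) * x i) := by
          simp [hsym']
    _ = 0 := hSexp
  have hdiag1 : ∑ i, ∑ k, Y i k * ((starRingEnd ℂ) (x i) * x i) = 0 := by
    calc ∑ i, ∑ k, Y i k * ((starRingEnd ℂ) (x i) * x i)
        = ∑ i, (∑ k, Y i k) * ((starRingEnd ℂ) (x i) * x i) := by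
          simp [Finset.sum_mul]
    _ = 0 := by simp [hrow]
  have hdiag2 : ∑ i, ∑ k, Y i k * ((starRingEnd ℂ) (x k) * x k) = 0 := by
    rw [Finset.sum_comm]
    calc ∑ k, ∑ i, Y i k * ((starRingEnd ℂ) (x k) * x k)
        = ∑ k, (∑ i, Y i k) * ((starRingEnd ℂ) (x k) * x k) := by
          simp [Finset.sum_mul]
    _ = 0 := by simp [hcol]
  -- key: sum of Y i k * normSq (x i - x k) = 0
  have hQ : ∑ i, ∑ k, Y i k * ((normSq (x i - x k) : ℝ) : ℂ) = 0 := by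
    have expand : ∀ i k, Y i k * ((normSq (x i - x k) : ℝ) : ℂ)
        = Y i k * ((starRingEnd ℂ) (x i) * x i)
          + Y i k * ((starRingEnd ℂ) (x k) * x k)
          - Y i k * ((starRingEnd ℂ) (x i) * x k)
          - Y i k * ((starRingEnd ℂ) (x k) * x i) := by
      intro i k
      have : ((normSq (x i - x k) : ℝ) : ℂ) = (x i - x k) * (starRingEnd ℂ) (x i - x k) := by
        rw [Complex.mul_conj]
      rw [this]
      simp only [map_sub]
      ring
    calc ∑ i, ∑ k, Y i k * ((normSq (x i - x k) : ℝ) : ℂ)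
        = (∑ i, ∑ k, Y i k * ((starRingEnd ℂ) (x i) * x i))
          + (∑ i, ∑ k, Y i k * ((starRingEnd ℂ) (x k) * x k))
          - (∑ i, ∑ k, Y i k * ((starRingEnd ℂ) (x i) * x k))
          - (∑ i, ∑ k, Y i k * ((starRingEnd ℂ) (x k) * x i)) := by
          simp only [← Finset.sum_sub_distrib, ← Finset.sum_add_distrib]
          congr 1; funext i; congr 1; funext k; exact expand i k
    _ = 0 := by rw [hdiag1, hdiag2, hSexp, hSswap]; ring
  -- take real parts
  have hR : ∑ i, ∑ k, (Y i k).re * normSq (x i - x k) = 0 := by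
    have := congrArg Complex.re hQ
    simpa [Complex.re_sum, Complex.mul_re] using this
  -- each term is ≤ 0
  have hterm : ∀ p : Fin (N+1) × Fin (N+1), p ∈ Finset.univ ×ˢ Finset.univ →
      (Y p.1 p.2).re * normSq (x p.1 - x p.2) ≤ 0 := by
    rintro ⟨i, k⟩ -
    by_cases hik : i = k
    · simp [hik]
    by_cases hY : Y i k = 0
    · simp [hY]
    · have h1 : (Y i k).re < 0 := by
        have := hoff i k hik hY; simpa using this
      exact mul_nonpos_of_nonpos_of_nonneg h1.le (normSq_nonneg _)
  have hzero : ∀ i k, i ≠ k → Y i k ≠ 0 → x i = x k := by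
    intro i k hik hY
    have hR' : ∑ p ∈ Finset.univ ×ˢ Finset.univ,
        (Y p.1 p.2).re * normSq (x p.1 - x p.2) = 0 := by
      rw [Finset.sum_product]; exact hR
    have := (Finset.sum_eq_zero_iff_of_nonpos hterm).mp hR' (i, k) (by simp)
    have h1 : (Y i k).re < 0 := by
      have := hoff i k hik hY; simpa using this
    have h2 : normSq (x i - x k) = 0 := by
      rcases mul_eq_zero.mp this with h | h
      · exact absurd h h1.ne
      · exact h
    exact sub_eq_zero.mp (normSq_eq_zero.mp h2)
  have hall : ∀ i, x i = 0 := by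
    intro i
    induction hconn 0 i with
    | refl => exact hx0
    | tail _ hbc ih => rw [← hzero _ _ hbc.1 hbc.2]; exact ih
  funext j
  simpa [hxs] using hall j.succ
end
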